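/- For every integer k ≥ 2 and every integer m ≥ 0, q^k · Σ_{j=0}^{m} C(m,j) q^j E_{j,q}^{(k,k)} + E_{m,q}^{(k,k)} = (1+q) · E_{m,q}^{(k−1,k−1)}. -/

import Mathlib

open Finset

/-- The q-number `[x]_q = (1 - q^x)/(1 - q)`, with `q^x = exp (x * log q)` (rpow). -/
noncomputable def qNum (q x : ℝ) : ℝ := (1 - q ^ x) / (1 - q)

/-- `[l]_{-q} = (1 - (-q)^l)/(1 + q)` for a natural number `l`. -/
noncomputable def qNumNeg (q : ℝ) (l : ℕ) : ℝ := (1 - (-q) ^ l) / (1 + q)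

/-- The higher-order q-Euler polynomial
`E_{m,q}^{(h,k)}(x) = ((1+q)^k/(1-q)^m) * Σ_{j=0}^m C(m,j) (-1)^j q^{jx} / Π_{i=0}^{k-1} (1 + q^{h+j-i})`. -/
noncomputable def qE (q : ℝ) (h : ℤ) (k m : ℕ) (x : ℝ) : ℝ :=
  ((1 + q) ^ k / (1 - q) ^ m) *
    ∑ j ∈ Finset.range (m + 1),
      (m.choose j : ℝ) * (-1) ^ j * q ^ ((j : ℝ) * x) /
        ∏ i ∈ Finset.range k, (1 + q ^ ((h : ℝ) + (j : ℝ) - (i : ℝ)))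

noncomputable def Dprod (q : ℝ) (K j : ℕ) : ℝ :=
  ∏ i ∈ Finset.range K, (1 + q ^ ((j : ℝ) + 1 + (i : ℝ)))

lemma prod_reflect (q : ℝ) (K j : ℕ) :
    ∏ i ∈ Finset.range K, (1 + q ^ ((K : ℝ) + (j : ℝ) - (i : ℝ))) = Dprod q K j := by
  unfold Dprod
  rw [← Finset.prod_range_reflect]
  refine Finset.prod_congr rfl fun i hi => ?_
  rw [Finset.mem_range] at hi
  congr 2
  push_cast [Nat.cast_sub (by omega : i ≤ K - 1), Nat.cast_sub (by omega : 1 ≤ K)]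
  ring

lemma Dprod_pos (q : ℝ) (hq : 0 < q) (K j : ℕ) : 0 < Dprod q K j :=
  Finset.prod_pos fun i _ => by positivity

lemma swap_sum (m : ℕ) (u : ℝ) (S : ℕ → ℝ) :
    ∑ j ∈ Finset.range (m + 1), ((m.choose j : ℝ) * u ^ j *
        ∑ n ∈ Finset.range (j + 1), (j.choose n : ℝ) * S n)
      = ∑ n ∈ Finset.range (m + 1), (m.choose n : ℝ) * (u ^ n * (1 + u) ^ (m - n)) * S n := by
  have h1 : ∀ j ∈ Finset.range (m+1), (m.choose j : ℝ) * u ^ j *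
        ∑ n ∈ Finset.range (j + 1), (j.choose n : ℝ) * S n
      = ∑ n ∈ Finset.Ico 0 (j+1), (m.choose j : ℝ) * (j.choose n : ℝ) * u ^ j * S n := by
    intro j _
    rw [Finset.mul_sum, Nat.Ico_zero_eq_range]
    exact Finset.sum_congr rfl fun n _ => by ring
  rw [Finset.sum_congr rfl h1, ← Nat.Ico_zero_eq_range, ← Finset.sum_Ico_Ico_comm]
  rw [Nat.Ico_zero_eq_range]
  refine Finset.sum_congr rfl fun n hn => ?_
  rw [Finset.mem_range] at hn
  have hnm : n ≤ m := by omega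
  have h2 : ∀ j ∈ Finset.Ico n (m+1),
      (m.choose j : ℝ) * (j.choose n : ℝ) * u ^ j * S n
        = ((m.choose n : ℝ) * ((m-n).choose (j-n) : ℝ)) * u ^ j * S n := by
    intro j hj
    rw [Finset.mem_Ico] at hj
    congr 2
    rw [← Nat.cast_mul, ← Nat.cast_mul, Nat.choose_mul hj.1]
  rw [Finset.sum_congr rfl h2, Finset.sum_Ico_eq_sum_range]
  have h3 : ∀ t ∈ Finset.range (m + 1 - n),
      ((m.choose n : ℝ) * ((m-n).choose (n + t - n) : ℝ)) * u ^ (n + t) * S n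
        = ((m.choose n : ℝ) * u ^ n * S n) *
          (u ^ t * (1:ℝ) ^ (m - n - t) * ((m-n).choose t : ℝ)) := by
    intro t _
    rw [Nat.add_sub_cancel_left, pow_add]
    ring
  rw [Finset.sum_congr rfl h3, ← Finset.mul_sum,
    show m + 1 - n = (m - n) + 1 by omega, ← add_pow u 1 (m - n), add_comm u 1]
  ring

theorem stmt_16 (q : ℝ) (hq : 0 < q) (hq1 : q ≠ 1) (k : ℕ) (hk : 2 ≤ k) (m : ℕ) :
    q ^ k * (∑ j ∈ Finset.range (m + 1), (m.choose j : ℝ) * q ^ j * qE q k k j 0) +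
        qE q k k m 0
      = (1 + q) * qE q ((k : ℤ) - 1) (k - 1) m 0 := by
  have h1q : (1 : ℝ) - q ≠ 0 := sub_ne_zero.2 (Ne.symm hq1)
  have hpq : (0 : ℝ) < 1 + q := by linarith
  set u : ℝ := q / (1 - q) with hu
  have hu1 : 1 + u = 1 / (1 - q) := by rw [hu]; field_simp; ring
  set S : ℕ → ℝ := fun n => (-1) ^ n / Dprod q k n with hS
  have hprodk : ∀ n : ℕ,
      (∏ i ∈ Finset.range k, (1 + q ^ (((k : ℤ) : ℝ) + (n : ℝ) - (i : ℝ)))) = Dprod q k n := by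
    intro n
    rw [← prod_reflect]
    refine Finset.prod_congr rfl fun i _ => ?_
    norm_num
  have hprodk' : ∀ n : ℕ,
      (∏ i ∈ Finset.range (k - 1), (1 + q ^ ((k : ℝ) - 1 + (n : ℝ) - (i : ℝ))))
        = Dprod q (k - 1) n := by
    intro n
    rw [← prod_reflect]
    refine Finset.prod_congr rfl fun i _ => ?_
    congr 2
    push_cast [Nat.cast_sub (show 1 ≤ k by omega)]
    ring
  have hqE : ∀ j : ℕ, qE q (k : ℤ) k j 0 =
      ((1 + q) ^ k / (1 - q) ^ j) * ∑ n ∈ Finset.range (j + 1), (j.choose n : ℝ) * S n := by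
    intro j
    unfold qE
    congr 1
    refine Finset.sum_congr rfl fun n _ => ?_
    rw [mul_zero, Real.rpow_zero, mul_one, hprodk n]
    simp only [hS]
    ring
  have hqE' : qE q ((k : ℤ) - 1) (k - 1) m 0 =
      ((1 + q) ^ (k - 1) / (1 - q) ^ m) *
        ∑ n ∈ Finset.range (m + 1), (m.choose n : ℝ) * ((-1) ^ n / Dprod q (k - 1) n) := by
    unfold qE
    congr 1
    refine Finset.sum_congr rfl fun n _ => ?_
    rw [mul_zero, Real.rpow_zero, mul_one]
    push_cast
    rw [hprodk' n]
    ring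
  simp only [hqE, hqE']
  have hstep : ∀ j ∈ Finset.range (m + 1),
      (m.choose j : ℝ) * q ^ j * ((1 + q) ^ k / (1 - q) ^ j *
          ∑ n ∈ Finset.range (j + 1), (j.choose n : ℝ) * S n)
        = (1 + q) ^ k * ((m.choose j : ℝ) * u ^ j *
            ∑ n ∈ Finset.range (j + 1), (j.choose n : ℝ) * S n) := by
    intro j _
    rw [hu, div_pow]
    have : (1 - q) ^ j ≠ 0 := pow_ne_zero _ h1q
    field_simp
  rw [Finset.sum_congr rfl hstep, ← Finset.mul_sum, swap_sum]
  simp only [Finset.mul_sum, ← Finset.sum_add_distrib]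
  refine Finset.sum_congr rfl fun n hn => ?_
  rw [Finset.mem_range] at hn
  have hnm : n ≤ m := by omega
  have hun : u ^ n * (1 + u) ^ (m - n) = q ^ n / (1 - q) ^ m := by
    rw [hu1, hu, div_pow, div_pow, one_pow, div_mul_div_comm, ← pow_add,
      Nat.add_sub_cancel' hnm, mul_one]
  simp only [hS]
  rw [hun]
  have e2 : q ^ ((n : ℝ) + 1 + ((k - 1 : ℕ) : ℝ)) = q ^ k * q ^ n := by
    rw [← pow_add, ← Real.rpow_natCast q (k + n)]
    congr 1
    push_cast [Nat.cast_sub (show 1 ≤ k by omega)]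
    ring
  have hDk : Dprod q k n = Dprod q (k - 1) n * (1 + q ^ k * q ^ n) := by
    conv_lhs => rw [show k = (k - 1) + 1 by omega]
    unfold Dprod
    rw [Finset.prod_range_succ, e2]
  have hD1 : Dprod q (k - 1) n ≠ 0 := ne_of_gt (Dprod_pos q hq (k - 1) n)
  have hD2 : (1 : ℝ) + q ^ k * q ^ n ≠ 0 := by positivity
  have hpk : (1 + q) ^ k = (1 + q) * (1 + q) ^ (k - 1) := by
    conv_lhs => rw [show k = (k - 1) + 1 by omega]
    rw [pow_succ]; ring
  rw [hDk, hpk]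
  field_simp
  ring
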